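/- Let A_t be the unique ℝ-linear operator on ℝ[X] with A_t(1) = 0 and A_t∘F − F∘A_t = H_t. Then for every n ≥ 0, A_t(Xⁿ) = (1/(1+σt))·(1+ηX+σX²)·Σ_{k=1}^{n−1} (n−k)·c_k·X^{n−k−1}; equivalently, A_t(Xⁿ) equals (1/(1+σt))·(1+ηX+σX²) times the derivative of the polynomial Σ_{k=1}^{n} c_k·X^{n−k}. -/
import Mathlib


open Polynomial Finset

/-- The operator of multiplication by `X` on `ℝ[X]`. -/
noncomputable def F : Module.End ℝ (Polynomial ℝ) := LinearMap.mulLeft ℝ (X : Polynomial ℝ)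

/-- The unique operator `A_t` with `A_t 1 = 0` and `A_t∘F − F∘A_t = H_t` is given on
monomials by `A_t(Xⁿ) = (1/(1+σt))·(1+ηX+σX²)·Σ_{k=1}^{n−1} (n−k)·c_k·X^{n−k−1}`. -/
theorem stmt9 (t η θ σ τ : ℝ) (ht : 0 < t) (hσ : 0 ≤ σ) (hτ : 0 ≤ τ)
    (hστ : σ * τ ≠ 1) (c : ℕ → ℝ) (hc1 : c 1 = 1)
    (hc : ∀ k : ℕ, 1 ≤ k →
      (1 + σ * t) * c (k + 1) =
        (θ - η * t) * c k +
          (t + τ) * ((∑ j ∈ Ico 1 k, c j * c (k - j)) +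
            η * ∑ j ∈ range k, c (j + 1) * c (k - j) +
            σ * ∑ j ∈ range k, c (j + 2) * c (k - j)))
    (H : Module.End ℝ (Polynomial ℝ))
    (hH : ∀ n : ℕ, H (X ^ n) =
      C (1 / (1 + σ * t)) * (1 + C η * X + C σ * X ^ 2) *
        ∑ k ∈ Icc 1 n, C (c k) * X ^ (n - k))
    (A : Module.End ℝ (Polynomial ℝ))
    (hA1 : A 1 = 0) (hA : A * F - F * A = H) :
    ∀ n : ℕ, A (X ^ n) =
      C (1 / (1 + σ * t)) * (1 + C η * X + C σ * X ^ 2) *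
        ∑ k ∈ Icc 1 (n - 1), C (((n - k : ℕ) : ℝ) * c k) * X ^ (n - k - 1) := by

  intro n
  induction n with
  | zero => simpa using hA1
  | succ n ih =>
    have key : A (X ^ (n + 1)) = X * A (X ^ n) + H (X ^ n) := by
      have h := congrArg (fun S : Module.End ℝ (Polynomial ℝ) => S (X ^ n)) hA
      simp only [LinearMap.sub_apply, Module.End.mul_apply, F,
        LinearMap.mulLeft_apply] at h
      rw [show (X : Polynomial ℝ) * X ^ n = X ^ (n + 1) by ring] at h
      linear_combination (norm := module) h
    rw [key, ih, hH n]
    have hsub : (n + 1 - 1) = n := by omega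
    rw [hsub]
    rw [show ∀ P S : Polynomial ℝ, X * (P * S) = P * (X * S) from fun P S => by ring]
    rw [← mul_add]
    congr 1
    -- extend first sum to Icc 1 n (extra terms are zero)
    have hext : (∑ k ∈ Icc 1 (n - 1), C (((n - k : ℕ) : ℝ) * c k) * X ^ (n - k - 1))
        = ∑ k ∈ Icc 1 n, C (((n - k : ℕ) : ℝ) * c k) * X ^ (n - k - 1) := by
      apply Finset.sum_subset
      · intro k hk
        simp only [mem_Icc] at hk ⊢
        exact ⟨hk.1, hk.2.trans (Nat.sub_le n 1)⟩
      · intro k hk hk'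
        simp only [mem_Icc, not_and, not_le] at hk hk'
        have hkn : k = n := by omega
        subst hkn
        simp
    rw [hext, Finset.mul_sum, ← Finset.sum_add_distrib]
    apply Finset.sum_congr rfl
    intro k hk
    simp only [mem_Icc] at hk
    rcases eq_or_lt_of_le hk.2 with h | h
    · subst h
      simp
    · have h1 : n - k - 1 + 1 = n - k := by omega
      have e1 : n + 1 - k - 1 = n - k := by omega
      have h3 : ((n + 1 - k : ℕ) : ℝ) = ((n - k : ℕ) : ℝ) + 1 := by
        have e2 : n + 1 - k = (n - k) + 1 := by omega
        rw [e2]; push_cast; ring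
      have h2 : (X : Polynomial ℝ) * X ^ (n - k - 1) = X ^ (n - k) := by
        conv_rhs => rw [← h1, pow_succ]
        exact mul_comm _ _
      rw [e1, h3, add_mul, one_mul, C_add]
      linear_combination (C (((n - k : ℕ) : ℝ) * c k)) * h2
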